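/- Let T and T′ be two strings over a finite alphabet A such that T′ is obtained from T by r single-character edit operations (each a replacement, insertion, or deletion), with |T| = n, |T′| = n′, and n′ ≤ n + r. Then for any k ≥ 0, |n·H_k(T) − n′·H_k(T′)| = O(r·(k+1)·(log₂(n+r) + log₂|A|)). -/

import Mathlib

open Finset

def ctxStr {A : Type*} [DecidableEq A] (T s : List A) : List A :=
  ((List.range T.length).filter (fun i =>
      decide (s.length ≤ i ∧ (T.drop (i - s.length)).take s.length = s))).filterMap
    (fun i => T[i]?)

noncomputable def H0 {A : Type*} [Fintype A] [DecidableEq A] (T : List A) : ℝ :=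
  -∑ c : A, ((T.count c : ℝ) / T.length) * Real.logb 2 ((T.count c : ℝ) / T.length)

noncomputable def Hk {A : Type*} [Fintype A] [DecidableEq A] (k : ℕ) (T : List A) : ℝ :=
  (1 / (T.length : ℝ)) *
    ∑ s : Fin k → A, ((ctxStr T (List.ofFn s)).length : ℝ) * H0 (ctxStr T (List.ofFn s))

def Edit {A : Type} (T T' : List A) : Prop :=
  (∃ (T₁ T₂ : List A) (c c' : A), T = T₁ ++ c :: T₂ ∧ T' = T₁ ++ c' :: T₂) ∨
  (∃ (T₁ T₂ : List A) (c : A), T = T₁ ++ T₂ ∧ T' = T₁ ++ c :: T₂) ∨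
  (∃ (T₁ T₂ : List A) (c : A), T = T₁ ++ c :: T₂ ∧ T' = T₁ ++ T₂)

namespace Stmt17Aux

set_option linter.unusedSectionVars false
set_option linter.unusedTactic false
set_option linter.unnecessarySeqFocus false
set_option linter.deprecated false

variable {A : Type} [DecidableEq A]

/-! ### The function `m ↦ m * log₂ m` -/

noncomputable def fE (m : ℕ) : ℝ := (m : ℝ) * Real.logb 2 m

lemma fE_mono (m : ℕ) : fE m ≤ fE (m+1) := by
  rcases Nat.eq_zero_or_pos m with h | h
  · subst h; simp [fE]
  · have h1 : (1:ℝ) ≤ m := by exact_mod_cast h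
    have h2 : (0:ℝ) ≤ Real.logb 2 m := Real.logb_nonneg one_lt_two h1
    have h3 : Real.logb 2 (m:ℝ) ≤ Real.logb 2 ((m:ℝ)+1) :=
      Real.logb_le_logb_of_le one_lt_two (by linarith) (by linarith)
    have : (m:ℝ) * Real.logb 2 m ≤ ((m:ℝ)+1) * Real.logb 2 ((m:ℝ)+1) :=
      mul_le_mul (by linarith) h3 h2 (by linarith)
    simpa [fE, Nat.cast_add] using this

lemma fE_step (m N : ℕ) (hm : m + 1 ≤ N) : fE (m+1) - fE m ≤ Real.logb 2 N + 2 := by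
  have hN1 : (1:ℝ) ≤ N := by exact_mod_cast Nat.one_le_iff_ne_zero.mpr (by omega)
  have hlogN : (0:ℝ) ≤ Real.logb 2 N := Real.logb_nonneg one_lt_two hN1
  rcases Nat.eq_zero_or_pos m with h | h
  · subst h; simp [fE]; linarith
  · have hm1 : (1:ℝ) ≤ m := by exact_mod_cast h
    have hmpos : (0:ℝ) < m := by linarith
    have hlog2 : (1/2:ℝ) ≤ Real.log 2 := by have := Real.log_two_gt_d9; linarith
    have hlog : Real.log ((m:ℝ)+1) - Real.log m ≤ 1/m := by
      have he1 : Real.log ((m:ℝ)+1) - Real.log m = Real.log (((m:ℝ)+1)/m) := by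
        rw [Real.log_div (by linarith) (by linarith)]
      have he2 := Real.log_le_sub_one_of_pos (x := ((m:ℝ)+1)/m) (by positivity)
      have he3 : ((m:ℝ)+1)/m - 1 = 1/m := by field_simp; ring
      rw [he1]; linarith [he3 ▸ he2]
    have hgb : Real.logb 2 ((m:ℝ)+1) - Real.logb 2 m ≤ (1/m) / Real.log 2 := by
      unfold Real.logb
      rw [← sub_div]
      exact div_le_div_of_nonneg_right hlog (by linarith) |>.trans_eq rfl
    have hbN : Real.logb 2 ((m:ℝ)+1) ≤ Real.logb 2 N :=
      Real.logb_le_logb_of_le one_lt_two (by linarith) (by exact_mod_cast hm)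
    have h5 : (m:ℝ) * ((1/m)/Real.log 2) = 1/Real.log 2 := by field_simp
    have h6 : (1:ℝ)/Real.log 2 ≤ 2 := by rw [div_le_iff₀ (by linarith)]; linarith
    have h7 : (m:ℝ) * (Real.logb 2 ((m:ℝ)+1) - Real.logb 2 m) ≤ (m:ℝ) * ((1/m)/Real.log 2) :=
      mul_le_mul_of_nonneg_left hgb (le_of_lt hmpos)
    have heq : fE (m+1) - fE m
        = Real.logb 2 ((m:ℝ)+1) + (m:ℝ)*(Real.logb 2 ((m:ℝ)+1) - Real.logb 2 m) := by
      simp only [fE]; push_cast; ring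
    linarith

lemma fE_mono_le {a b : ℕ} (h : a ≤ b) : fE a ≤ fE b := by
  induction b, h using Nat.le_induction with
  | base => exact le_refl _
  | succ n hn ih => exact ih.trans (fE_mono n)

lemma fE_le_of_le {a N : ℕ} : ∀ {b : ℕ}, a ≤ b → b ≤ N →
    fE b - fE a ≤ ((b:ℝ) - a) * (Real.logb 2 N + 2) := by
  intro b hab
  induction b, hab using Nat.le_induction with
  | base => intro _; simp
  | succ n hn ih =>
    intro hN
    have h1 := fE_step n N hN
    have h2 := ih (by omega)
    have h3 : ((n:ℝ)+1-(a:ℝ)) * (Real.logb 2 N + 2)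
        = (Real.logb 2 N + 2) + ((n:ℝ)-a)*(Real.logb 2 N + 2) := by ring
    push_cast
    linarith

lemma fE_diff (a b N : ℕ) (ha : a ≤ N) (hb : b ≤ N) :
    |fE a - fE b| ≤ |(a:ℝ) - (b:ℝ)| * (Real.logb 2 N + 2) := by
  rcases le_total a b with h | h
  · rw [abs_sub_comm, abs_of_nonneg (by linarith [fE_mono_le h])]
    have he : |(a:ℝ)-(b:ℝ)| = (b:ℝ) - a := by
      rw [abs_sub_comm]
      exact abs_of_nonneg (by simp; exact_mod_cast h)
    rw [he]
    exact fE_le_of_le h hb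
  · rw [abs_of_nonneg (by linarith [fE_mono_le h])]
    have he : |(a:ℝ)-(b:ℝ)| = (a:ℝ) - b := abs_of_nonneg (by simp; exact_mod_cast h)
    rw [he]
    exact fE_le_of_le h ha

/-! ### Context-character pairs -/

def gP (k : ℕ) (T : List A) (i : ℕ) : Option (List A × A) :=
  if k ≤ i then (T[i]?).map (fun c => ((T.drop (i - k)).take k, c)) else none

def pairsL (k : ℕ) (T : List A) : List (List A × A) :=
  (List.range T.length).filterMap (gP k T)

lemma pairsL_length_le (k : ℕ) (T : List A) : (pairsL k T).length ≤ T.length := by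
  simpa [pairsL] using List.length_filterMap_le (gP k T) (List.range T.length)

lemma count_ctxStr (k : ℕ) (T s : List A) (hs : s.length = k) (c : A) :
    (ctxStr T s).count c = (pairsL k T).count (s, c) := by
  unfold ctxStr pairsL
  rw [List.count_filterMap, List.count_filterMap, List.countP_filter]
  apply List.countP_congr
  intro i hi
  have hin : i < T.length := List.mem_range.mp hi
  have hget : T[i]? = some (T[i]) := List.getElem?_eq_getElem hin
  subst hs
  simp only [hget, gP, Bool.and_eq_true, beq_iff_eq, decide_eq_true_eq]
  constructor
  · rintro ⟨hc, hk, hctx⟩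
    rw [if_pos hk]
    simp only [Option.map_some, Option.some_inj, Prod.mk.injEq]
    exact ⟨hctx, by simpa using hc⟩
  · intro h
    by_cases hk : s.length ≤ i
    · rw [if_pos hk] at h
      simp only [Option.map_some, Option.some_inj, Prod.mk.injEq] at h
      exact ⟨by simp [h.2], hk, h.1⟩
    · rw [if_neg hk] at h; simp at h

lemma length_eq_sum_count [Fintype A] (l : List A) : l.length = ∑ c, l.count c := by
  induction l with
  | nil => simp
  | cons a l ih =>
      simp only [List.count_cons, List.length_cons, Finset.sum_add_distrib, ← ih]
      simp [Finset.sum_ite_eq' Finset.univ a (fun _ => 1)]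

lemma length_ctxStr [Fintype A] (k : ℕ) (T s : List A) (hs : s.length = k) :
    (ctxStr T s).length = ∑ c, (pairsL k T).count (s, c) := by
  rw [length_eq_sum_count]
  exact Finset.sum_congr rfl fun c _ => count_ctxStr k T s hs c

/-! ### Splitting pairs along an edit -/

lemma gP_prefix (k : ℕ) (T₁ L : List A) (i : ℕ) (hi : i < T₁.length) :
    gP k (T₁ ++ L) i = gP k T₁ i := by
  unfold gP
  by_cases hk : k ≤ i
  · rw [if_pos hk, if_pos hk, List.getElem?_append_left hi,
      List.drop_append_of_le_length (by omega),
      List.take_append_of_le_length (by rw [List.length_drop]; omega)]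
  · rw [if_neg hk, if_neg hk]

lemma gP_suffix (k : ℕ) (L T₂ : List A) (j : ℕ) (hj : k ≤ j) :
    gP k (L ++ T₂) (L.length + j) = gP k T₂ j := by
  unfold gP
  rw [if_pos (by omega), if_pos hj, List.getElem?_append_right (by omega)]
  have h1 : L.length + j - k = L.length + (j - k) := by omega
  rw [h1, List.drop_length_add_append]
  congr 2
  omega

lemma pairsL_small (k : ℕ) (T : List A) (h : T.length ≤ k) : pairsL k T = [] := by
  rw [pairsL, List.filterMap_eq_nil_iff]
  intro i hi
  have := List.mem_range.mp hi
  rw [gP, if_neg (by omega)]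

lemma pairsL_split (k : ℕ) (T₁ m T₂ : List A) :
    ∃ Q : List (List A × A), Q.length ≤ m.length + k ∧
      pairsL k (T₁ ++ (m ++ T₂)) = pairsL k T₁ ++ Q ++ pairsL k T₂ := by
  set T : List A := T₁ ++ (m ++ T₂) with hT
  set p := T₁.length
  set μ := m.length
  set t := T₂.length
  have hTlen : T.length = p + μ + t := by simp [hT, p, μ, t]; omega
  have hpre : List.filterMap (gP k T) (List.range p) = pairsL k T₁ := by
    rw [pairsL]
    exact List.filterMap_congr fun i hi => gP_prefix k T₁ (m ++ T₂) i (List.mem_range.mp hi)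
  rcases le_or_gt t k with hc | hc
  · refine ⟨List.filterMap (gP k T ∘ (fun x => p + x)) (List.range (μ + t)), ?_, ?_⟩
    · calc _ ≤ (List.range (μ + t)).length := List.length_filterMap_le _ _
        _ ≤ μ + k := by simp; omega
    · rw [pairsL_small k T₂ hc, List.append_nil, pairsL, hTlen]
      have : p + μ + t = p + (μ + t) := by omega
      rw [this, List.range_add, List.filterMap_append, hpre, List.filterMap_map]
  · refine ⟨List.filterMap (gP k T ∘ (fun x => p + x)) (List.range (μ + k)), ?_, ?_⟩
    · calc _ ≤ (List.range (μ + k)).length := List.length_filterMap_le _ _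
        _ ≤ μ + k := by simp
    · have hsuf : List.filterMap (gP k T ∘ (fun x => p + (μ + k) + x)) (List.range (t - k))
          = pairsL k T₂ := by
        have h2 : pairsL k T₂
            = List.filterMap (gP k T₂ ∘ (fun x => k + x)) (List.range (t - k)) := by
          obtain ⟨d, hd⟩ : ∃ d, T₂.length = k + d := ⟨t - k, by omega⟩
          have hdk : t - k = d := by omega
          rw [pairsL, hd, hdk, List.range_add, List.filterMap_append, List.filterMap_map]
          have hnil : List.filterMap (gP k T₂) (List.range k) = [] := by
            rw [List.filterMap_eq_nil_iff]
            intro i hi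
            have := List.mem_range.mp hi
            rw [gP, if_neg (by omega)]
          rw [hnil, List.nil_append]
        rw [h2]
        apply List.filterMap_congr
        intro x _
        have hL : T = (T₁ ++ m) ++ T₂ := by simp [hT]
        have hLlen : (T₁ ++ m).length = p + μ := by simp [p, μ]
        have h3 : p + (μ + k) + x = (T₁ ++ m).length + (k + x) := by rw [hLlen]; omega
        simp only [Function.comp_apply, h3, hL]
        exact gP_suffix k (T₁ ++ m) T₂ (k + x) (by omega)
      rw [pairsL, hTlen]
      have h4 : p + μ + t = (p + (μ + k)) + (t - k) := by omega
      rw [h4, List.range_add, List.filterMap_append, List.filterMap_map, List.range_add,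
        List.filterMap_append, List.filterMap_map, hpre, hsuf, List.append_assoc]

/-! ### Entropy in terms of pair counts -/

lemma g_eq [Fintype A] (S : List A) :
    (S.length : ℝ) * H0 S = fE S.length - ∑ c, fE (S.count c) := by
  by_cases h : S.length = 0
  · have hS : S = [] := List.length_eq_zero_iff.mp h
    subst hS; simp [H0, fE]
  · have hn : (0:ℝ) < S.length := by
      exact_mod_cast Nat.pos_of_ne_zero h
    have key : ∀ c : A,
        -((S.length:ℝ) * (((S.count c:ℝ))/S.length * Real.logb 2 ((S.count c:ℝ)/S.length)))
        = (S.count c:ℝ) * Real.logb 2 S.length - fE (S.count c) := by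
      intro c
      by_cases hm : S.count c = 0
      · simp [hm, fE]
      · have hm' : (0:ℝ) < S.count c := by exact_mod_cast Nat.pos_of_ne_zero hm
        rw [Real.logb_div (ne_of_gt hm') (ne_of_gt hn), fE]
        field_simp
        ring
    calc (S.length:ℝ) * H0 S
        = ∑ c, -((S.length:ℝ) * (((S.count c:ℝ))/S.length
            * Real.logb 2 ((S.count c:ℝ)/S.length))) := by
          rw [H0, mul_neg, Finset.mul_sum, ← Finset.sum_neg_distrib]
      _ = ∑ c, ((S.count c:ℝ) * Real.logb 2 S.length - fE (S.count c)) :=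
          Finset.sum_congr rfl fun c _ => key c
      _ = (∑ c, (S.count c:ℝ)) * Real.logb 2 S.length - ∑ c, fE (S.count c) := by
          rw [Finset.sum_sub_distrib, Finset.sum_mul]
      _ = fE S.length - ∑ c, fE (S.count c) := by
          have : (∑ c, (S.count c:ℝ)) = (S.length:ℝ) := by
            rw [length_eq_sum_count S]; push_cast; rfl
          rw [this, fE]

noncomputable def Phi [Fintype A] (k : ℕ) (T : List A) : ℝ :=
  ∑ s : Fin k → A, (fE (∑ c, (pairsL k T).count (List.ofFn s, c))
    - ∑ c, fE ((pairsL k T).count (List.ofFn s, c)))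

lemma nHk_eq_Phi [Fintype A] (k : ℕ) (T : List A) :
    (T.length : ℝ) * Hk k T = Phi k T := by
  by_cases h : T.length = 0
  · have hT : T = [] := List.length_eq_zero_iff.mp h
    subst hT
    simp [Hk, Phi, pairsL, fE]
  · have hn : (T.length:ℝ) ≠ 0 := Nat.cast_ne_zero.mpr h
    rw [Hk, ← mul_assoc, mul_one_div, div_self hn, one_mul, Phi]
    apply Finset.sum_congr rfl
    intro s _
    have hs : (List.ofFn s).length = k := List.length_ofFn (f := s)
    rw [g_eq, length_ctxStr k T _ hs]
    congr 1
    exact Finset.sum_congr rfl fun c _ => by rw [count_ctxStr k T _ hs c]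

/-! ### The multiset comparison for a single edit -/

lemma edit_pairs_aux (k : ℕ) (T₁ m m' T₂ : List A) (hm : m.length ≤ 1) (hm' : m'.length ≤ 1) :
    ∃ D D' : Multiset (List A × A),
      (pairsL k (T₁ ++ (m' ++ T₂)) : Multiset (List A × A)) + D
        = (pairsL k (T₁ ++ (m ++ T₂)) : Multiset (List A × A)) + D' ∧
      Multiset.card D ≤ k+1 ∧ Multiset.card D' ≤ k+1 := by
  obtain ⟨Q, hQ, hEq⟩ := pairsL_split k T₁ m T₂
  obtain ⟨Q', hQ', hEq'⟩ := pairsL_split k T₁ m' T₂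
  refine ⟨(Q : Multiset (List A × A)), (Q' : Multiset (List A × A)), ?_, ?_, ?_⟩
  · rw [hEq, hEq']
    have e1 : ((pairsL k T₁ ++ Q' ++ pairsL k T₂ : List (List A × A)) : Multiset (List A × A))
        = (pairsL k T₁ : Multiset (List A × A)) + (Q' : Multiset _) + (pairsL k T₂ : Multiset _) := by
      push_cast; rfl
    have e2 : ((pairsL k T₁ ++ Q ++ pairsL k T₂ : List (List A × A)) : Multiset (List A × A))
        = (pairsL k T₁ : Multiset (List A × A)) + (Q : Multiset _) + (pairsL k T₂ : Multiset _) := by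
      push_cast; rfl
    rw [e1, e2]
    abel
  · simpa using by omega
  · simpa using by omega

lemma edit_pairs (k : ℕ) {T T' : List A} (h : Edit T T') :
    ∃ D D' : Multiset (List A × A),
      (pairsL k T' : Multiset (List A × A)) + D = (pairsL k T : Multiset (List A × A)) + D' ∧
      Multiset.card D ≤ k+1 ∧ Multiset.card D' ≤ k+1 := by
  have cons_eq : ∀ (X : List A) (c : A) (Y : List A), X ++ c :: Y = X ++ ([c] ++ Y) := by
    intros; simp
  rcases h with ⟨T₁,T₂,c,c',h1,h2⟩|⟨T₁,T₂,c,h1,h2⟩|⟨T₁,T₂,c,h1,h2⟩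
  · rw [h1, h2, cons_eq, cons_eq]
    exact edit_pairs_aux k T₁ [c] [c'] T₂ (by simp) (by simp)
  · rw [h1, h2, cons_eq, show T₁ ++ T₂ = T₁ ++ ([] ++ T₂) by simp]
    exact edit_pairs_aux k T₁ [] [c] T₂ (by simp) (by simp)
  · rw [h1, h2, cons_eq, show T₁ ++ T₂ = T₁ ++ ([] ++ T₂) by simp]
    exact edit_pairs_aux k T₁ [c] [] T₂ (by simp) (by simp)

lemma sum_count_le (t : Finset (List A × A)) (D : Multiset (List A × A)) :
    ∑ y ∈ t, D.count y ≤ Multiset.card D := by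
  calc ∑ y ∈ t, D.count y ≤ ∑ y ∈ t ∪ D.toFinset, D.count y :=
      Finset.sum_le_sum_of_subset Finset.subset_union_left
    _ = ∑ y ∈ D.toFinset, D.count y := by
      apply (Finset.sum_subset Finset.subset_union_right ?_).symm
      intro x _ hx
      exact Multiset.count_eq_zero.mpr (fun hmem => hx (Multiset.mem_toFinset.mpr hmem))
    _ = Multiset.card D := Multiset.toFinset_sum_count_eq D

lemma sum_count_ofFn_le [Fintype A] (k : ℕ) (D : Multiset (List A × A)) :
    ∑ s : Fin k → A, ∑ c : A, D.count (List.ofFn s, c) ≤ Multiset.card D := by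
  have hstep : ∑ s : Fin k → A, ∑ c : A, D.count (List.ofFn s, c)
      = ∑ x : (Fin k → A) × A, D.count (List.ofFn x.1, x.2) :=
    (Fintype.sum_prod_type (fun x : (Fin k → A) × A => D.count (List.ofFn x.1, x.2))).symm
  rw [hstep]
  have hinj : ∀ x ∈ (Finset.univ : Finset ((Fin k → A) × A)), ∀ y ∈ Finset.univ,
      (fun x : (Fin k → A) × A => (List.ofFn x.1, x.2)) x
        = (fun x : (Fin k → A) × A => (List.ofFn x.1, x.2)) y → x = y := by
    intro x _ y _ hxy
    simp only [Prod.mk.injEq] at hxy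
    exact Prod.ext (List.ofFn_injective hxy.1) hxy.2
  calc ∑ x : (Fin k → A) × A, D.count (List.ofFn x.1, x.2)
      = ∑ y ∈ Finset.image (fun x : (Fin k → A) × A => (List.ofFn x.1, x.2)) Finset.univ,
          D.count y := (Finset.sum_image (f := fun y => Multiset.count y D) hinj).symm
    _ ≤ Multiset.card D := sum_count_le _ D

lemma sum_count_fix_le [Fintype A] (k : ℕ) (s : Fin k → A) (D : Multiset (List A × A)) :
    ∑ c : A, D.count (List.ofFn s, c) ≤ Multiset.card D := by
  have hinj : ∀ x ∈ (Finset.univ : Finset A), ∀ y ∈ Finset.univ,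
      (fun c : A => ((List.ofFn s : List A), c)) x = (fun c : A => ((List.ofFn s : List A), c)) y
        → x = y := by
    intro x _ y _ hxy
    simpa using hxy
  calc ∑ c : A, D.count (List.ofFn s, c)
      = ∑ y ∈ Finset.image (fun c : A => ((List.ofFn s : List A), c)) Finset.univ, D.count y :=
        (Finset.sum_image (f := fun y => Multiset.count y D) hinj).symm
    _ ≤ Multiset.card D := sum_count_le _ D

lemma listCount_eq_multisetCount (x : List A × A) (l : List (List A × A)) :
    l.count x = Multiset.count x (l : Multiset (List A × A)) := by
  induction l with
  | nil => simp
  | cons a l ih =>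
    rw [← Multiset.cons_coe, Multiset.count_cons, List.count_cons, ih]
    congr 1
    by_cases h : x = a
    · simp [h]
    · rw [if_neg h, if_neg (by simpa [beq_iff_eq] using Ne.symm h)]

/-! ### The single-edit bound on Φ -/

lemma phi_edit [Fintype A] {T T' : List A} (k N : ℕ) (hN : 1 ≤ N)
    (hT : T.length ≤ N) (hT' : T'.length ≤ N) (h : Edit T T') :
    |Phi k T - Phi k T'| ≤ 4*((k:ℝ)+1)*(Real.logb 2 N + 2) := by
  obtain ⟨D, D', hEq, hD, hD'⟩ := edit_pairs k h
  set B := Real.logb 2 N + 2 with hB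
  have hB0 : 0 ≤ B := by
    have h0 : (0:ℝ) ≤ Real.logb 2 N := Real.logb_nonneg one_lt_two (by exact_mod_cast hN)
    rw [hB]; linarith
  set a : (Fin k → A) → A → ℕ := fun s c => (pairsL k T).count (List.ofFn s, c) with ha
  set b : (Fin k → A) → A → ℕ := fun s c => (pairsL k T').count (List.ofFn s, c) with hb
  set d : (Fin k → A) → A → ℝ := fun s c =>
    (D.count (List.ofFn s, c) : ℝ) + (D'.count (List.ofFn s, c) : ℝ) with hd
  have hd0 : ∀ s c, 0 ≤ d s c := by intro s c; rw [hd]; positivity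
  have hcnt : ∀ s c, (b s c : ℝ) - a s c
      = (D'.count (List.ofFn s, c) : ℝ) - D.count (List.ofFn s, c) := by
    intro s c
    have h0 := congrArg (Multiset.count (List.ofFn s, c)) hEq
    simp only [Multiset.count_add, ← listCount_eq_multisetCount] at h0
    have hr : (((pairsL k T').count (List.ofFn s, c) : ℕ) : ℝ) + Multiset.count (List.ofFn s, c) D
        = ((pairsL k T).count (List.ofFn s, c) : ℕ) + Multiset.count (List.ofFn s, c) D' := by
      exact_mod_cast h0
    simp only [ha, hb]
    linarith
  have habs : ∀ s c, |(a s c:ℝ) - b s c| ≤ d s c := by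
    intro s c
    rw [abs_sub_comm, hcnt s c, hd]
    have h1 : (0:ℝ) ≤ D.count (List.ofFn s, c) := by positivity
    have h2 : (0:ℝ) ≤ D'.count (List.ofFn s, c) := by positivity
    rw [abs_le]; constructor <;> simp <;> linarith
  have hcard : ∀ (X : List A),
      Multiset.card (pairsL k X : Multiset (List A × A)) = (pairsL k X).length :=
    fun X => Multiset.coe_card _
  have haN : ∀ s c, a s c ≤ N := by
    intro s c
    calc a s c = Multiset.count (List.ofFn s, c) (pairsL k T : Multiset (List A × A)) := by
          simp only [ha]; exact listCount_eq_multisetCount _ _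
      _ ≤ Multiset.card (pairsL k T : Multiset (List A × A)) := Multiset.count_le_card _ _
      _ ≤ N := by rw [hcard]; exact le_trans (pairsL_length_le k T) hT
  have hbN : ∀ s c, b s c ≤ N := by
    intro s c
    calc b s c = Multiset.count (List.ofFn s, c) (pairsL k T' : Multiset (List A × A)) := by
          simp only [hb]; exact listCount_eq_multisetCount _ _
      _ ≤ Multiset.card (pairsL k T' : Multiset (List A × A)) := Multiset.count_le_card _ _
      _ ≤ N := by rw [hcard]; exact le_trans (pairsL_length_le k T') hT'
  have hfab : ∀ s c, |fE (a s c) - fE (b s c)| ≤ d s c * B := by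
    intro s c
    exact le_trans (fE_diff _ _ N (haN s c) (hbN s c))
      (mul_le_mul_of_nonneg_right (habs s c) hB0)
  have hLaN : ∀ s, (∑ c, a s c) ≤ N := by
    intro s
    calc (∑ c, a s c)
        = ∑ c, Multiset.count (List.ofFn s, c) (pairsL k T : Multiset (List A × A)) :=
          Finset.sum_congr rfl fun c _ => by
            simp only [ha]
            exact listCount_eq_multisetCount _ _
      _ ≤ Multiset.card (pairsL k T : Multiset (List A × A)) := sum_count_fix_le k s _
      _ ≤ N := by rw [hcard]; exact le_trans (pairsL_length_le k T) hT
  have hLbN : ∀ s, (∑ c, b s c) ≤ N := by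
    intro s
    calc (∑ c, b s c)
        = ∑ c, Multiset.count (List.ofFn s, c) (pairsL k T' : Multiset (List A × A)) :=
          Finset.sum_congr rfl fun c _ => by
            simp only [hb]
            exact listCount_eq_multisetCount _ _
      _ ≤ Multiset.card (pairsL k T' : Multiset (List A × A)) := sum_count_fix_le k s _
      _ ≤ N := by rw [hcard]; exact le_trans (pairsL_length_le k T') hT'
  have hLsum : ∀ s, |fE (∑ c, a s c) - fE (∑ c, b s c)| ≤ (∑ c, d s c) * B := by
    intro s
    refine le_trans (fE_diff _ _ N (hLaN s) (hLbN s)) (mul_le_mul_of_nonneg_right ?_ hB0)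
    have hcast : ((∑ c, a s c : ℕ):ℝ) - ((∑ c, b s c : ℕ):ℝ)
        = ∑ c, ((a s c:ℝ) - (b s c:ℝ)) := by
      rw [Finset.sum_sub_distrib]; push_cast; rfl
    rw [hcast]
    exact le_trans (Finset.abs_sum_le_sum_abs _ _) (Finset.sum_le_sum fun c _ => habs s c)
  have hsplit : Phi k T - Phi k T'
      = ∑ s, ((fE (∑ c, a s c) - fE (∑ c, b s c)) - ∑ c, (fE (a s c) - fE (b s c))) := by
    rw [Phi, Phi, ← Finset.sum_sub_distrib]
    exact Finset.sum_congr rfl fun s _ => by rw [Finset.sum_sub_distrib]; ring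
  have hSle : ∑ s, ∑ c, d s c ≤ ((k:ℝ)+1) + ((k:ℝ)+1) := by
    have h1 : ∑ s : Fin k → A, ∑ c : A, (D.count (List.ofFn s, c):ℝ) ≤ (k:ℝ)+1 := by
      have hn := le_trans (sum_count_ofFn_le k D) hD
      calc ∑ s : Fin k → A, ∑ c : A, (D.count (List.ofFn s, c):ℝ)
          = ((∑ s : Fin k → A, ∑ c : A, D.count (List.ofFn s, c) : ℕ):ℝ) := by push_cast; rfl
        _ ≤ ((k+1:ℕ):ℝ) := Nat.cast_le.mpr hn
        _ = (k:ℝ)+1 := by push_cast; rfl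
    have h2 : ∑ s : Fin k → A, ∑ c : A, (D'.count (List.ofFn s, c):ℝ) ≤ (k:ℝ)+1 := by
      have hn := le_trans (sum_count_ofFn_le k D') hD'
      calc ∑ s : Fin k → A, ∑ c : A, (D'.count (List.ofFn s, c):ℝ)
          = ((∑ s : Fin k → A, ∑ c : A, D'.count (List.ofFn s, c) : ℕ):ℝ) := by push_cast; rfl
        _ ≤ ((k+1:ℕ):ℝ) := Nat.cast_le.mpr hn
        _ = (k:ℝ)+1 := by push_cast; rfl
    calc ∑ s, ∑ c, d s c
        = (∑ s : Fin k → A, ∑ c : A, (D.count (List.ofFn s, c):ℝ))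
          + ∑ s : Fin k → A, ∑ c : A, (D'.count (List.ofFn s, c):ℝ) := by
          rw [hd, ← Finset.sum_add_distrib]
          exact Finset.sum_congr rfl fun s _ => by rw [← Finset.sum_add_distrib]
      _ ≤ _ := add_le_add h1 h2
  calc |Phi k T - Phi k T'|
      ≤ ∑ s, ((∑ c, d s c) * B + ∑ c, d s c * B) := by
        rw [hsplit]
        refine le_trans (Finset.abs_sum_le_sum_abs _ _) (Finset.sum_le_sum ?_)
        intro s _
        refine le_trans (abs_sub _ _) (add_le_add (hLsum s) ?_)
        exact le_trans (Finset.abs_sum_le_sum_abs _ _) (Finset.sum_le_sum fun c _ => hfab s c)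
    _ = 2 * (∑ s, ∑ c, d s c) * B := by
        simp only [← Finset.sum_mul, Finset.sum_add_distrib]
        ring
    _ ≤ 2 * (((k:ℝ)+1) + ((k:ℝ)+1)) * B := by
        refine mul_le_mul_of_nonneg_right ?_ hB0
        exact mul_le_mul_of_nonneg_left hSle (by norm_num)
    _ = 4*((k:ℝ)+1)*B := by ring

/-! ### Miscellaneous lemmas -/

lemma edit_length {T T' : List A} (h : Edit T T') :
    T'.length ≤ T.length + 1 ∧ T.length ≤ T'.length + 1 := by
  rcases h with ⟨T₁,T₂,c,c',h1,h2⟩|⟨T₁,T₂,c,h1,h2⟩|⟨T₁,T₂,c,h1,h2⟩ <;>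
    subst h1 <;> subst h2 <;> simp <;> omega

lemma H0_zero_of_card_le_one [Fintype A] (hA : Fintype.card A ≤ 1) (S : List A) : H0 S = 0 := by
  rw [H0, neg_eq_zero]
  apply Finset.sum_eq_zero
  intro c _
  have hsub : Subsingleton A := Fintype.card_le_one_iff_subsingleton.mp hA
  have hc : S.count c = S.length := List.count_eq_length.mpr (fun b _ => Subsingleton.elim c b)
  rw [hc]
  by_cases h : S.length = 0
  · simp [h]
  · have hd : ((S.length:ℝ))/S.length = 1 := div_self (Nat.cast_ne_zero.mpr h)
    simp [hd]

lemma Hk_zero_of_card_le_one [Fintype A] (hA : Fintype.card A ≤ 1) (k : ℕ) (T : List A) :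
    Hk k T = 0 := by
  rw [Hk]
  have hz : ∀ s : Fin k → A,
      ((ctxStr T (List.ofFn s)).length : ℝ) * H0 (ctxStr T (List.ofFn s)) = 0 := by
    intro s; rw [H0_zero_of_card_le_one hA, mul_zero]
  rw [Finset.sum_congr rfl fun s _ => hz s]
  simp

end Stmt17Aux

open Stmt17Aux in
theorem stmt17 : ∃ C : ℝ, 0 < C ∧
    ∀ (A : Type) (_ : Fintype A) (_ : DecidableEq A) (T T' : List A) (r k : ℕ)
      (f : ℕ → List A), f 0 = T → f r = T' → (∀ i < r, Edit (f i) (f (i + 1))) →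
      T'.length ≤ T.length + r →
      |(T.length : ℝ) * Hk k T - (T'.length : ℝ) * Hk k T'| ≤
        C * r * (k + 1) * (Real.logb 2 (T.length + r) + Real.logb 2 (Fintype.card A)) := by
  refine ⟨8, by norm_num, ?_⟩
  intro A iF iD T T' r k f hf0 hfr hedit _hlen
  rcases Nat.eq_zero_or_pos r with hr | hr
  · subst hr
    have hTT : T = T' := hf0.symm.trans hfr
    subst hTT
    simp
  by_cases hA : Fintype.card A ≤ 1
  · rw [Hk_zero_of_card_le_one hA, Hk_zero_of_card_le_one hA]
    simp only [mul_zero, sub_self, abs_zero]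
    have hca : Real.logb 2 ((Fintype.card A : ℕ) : ℝ) = 0 := by
      rcases Nat.le_one_iff_eq_zero_or_eq_one.mp hA with h | h <;> rw [h] <;> simp
    rw [hca, add_zero]
    have hlog : (0:ℝ) ≤ Real.logb 2 ((T.length:ℝ) + r) := by
      apply Real.logb_nonneg one_lt_two
      have h1 : (1:ℝ) ≤ (r:ℝ) := by exact_mod_cast hr
      have h2 : (0:ℝ) ≤ (T.length:ℝ) := Nat.cast_nonneg _
      linarith
    have h8 : (0:ℝ) ≤ 8 * (r:ℝ) * ((k:ℝ)+1) := by positivity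
    exact mul_nonneg h8 hlog
  · push_neg at hA
    set N := T.length + r with hN
    have hN1 : 1 ≤ N := by omega
    have hlen_i : ∀ i, i ≤ r → (f i).length ≤ T.length + i := by
      intro i
      induction i with
      | zero => intro _; simp [hf0]
      | succ m ih =>
        intro hm
        have h1 := (edit_length (hedit m (by omega))).1
        have h2 := ih (by omega)
        omega
    have hlenN : ∀ i, i ≤ r → (f i).length ≤ N := fun i hi =>
      le_trans (hlen_i i hi) (by omega)
    have htel : ∀ j, j ≤ r →
        |Phi k (f 0) - Phi k (f j)| ≤ (j:ℝ) * (4*((k:ℝ)+1)*(Real.logb 2 N + 2)) := by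
      intro j
      induction j with
      | zero => intro _; simp
      | succ m ih =>
        intro hm
        have h1 := phi_edit (T := f m) (T' := f (m+1)) k N hN1 (hlenN m (by omega))
          (hlenN (m+1) (by omega)) (hedit m (by omega))
        have h2 := ih (by omega)
        calc |Phi k (f 0) - Phi k (f (m+1))|
            ≤ |Phi k (f 0) - Phi k (f m)| + |Phi k (f m) - Phi k (f (m+1))| := abs_sub_le _ _ _
          _ ≤ (m:ℝ) * (4*((k:ℝ)+1)*(Real.logb 2 N + 2))
              + 4*((k:ℝ)+1)*(Real.logb 2 N + 2) := add_le_add h2 h1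
          _ = ((m+1:ℕ):ℝ) * (4*((k:ℝ)+1)*(Real.logb 2 N + 2)) := by push_cast; ring
    have hmain := htel r le_rfl
    rw [hf0, hfr] at hmain
    rw [nHk_eq_Phi, nHk_eq_Phi]
    have hNcast : ((N:ℕ):ℝ) = (T.length:ℝ) + r := by rw [hN]; push_cast; rfl
    rw [show ((T.length:ℝ) + r) = ((N:ℕ):ℝ) from hNcast.symm]
    refine le_trans hmain ?_
    have hlogN0 : (0:ℝ) ≤ Real.logb 2 (N:ℝ) :=
      Real.logb_nonneg one_lt_two (by exact_mod_cast hN1)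
    have hlogA1 : (1:ℝ) ≤ Real.logb 2 ((Fintype.card A : ℕ):ℝ) := by
      rw [show (1:ℝ) = Real.logb 2 2 from (Real.logb_self_eq_one one_lt_two).symm]
      exact Real.logb_le_logb_of_le one_lt_two (by norm_num) (by exact_mod_cast hA)
    have hr0 : (0:ℝ) ≤ r := Nat.cast_nonneg r
    have hk0 : (0:ℝ) ≤ (k:ℝ)+1 := by positivity
    have key : 4*((k:ℝ)+1)*(Real.logb 2 (N:ℝ) + 2)
        ≤ 8*((k:ℝ)+1)*(Real.logb 2 (N:ℝ) + Real.logb 2 ((Fintype.card A : ℕ):ℝ)) := by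
      nlinarith [hlogN0, hlogA1, hk0]
    calc (r:ℝ) * (4*((k:ℝ)+1)*(Real.logb 2 (N:ℝ) + 2))
        ≤ (r:ℝ) * (8*((k:ℝ)+1)*(Real.logb 2 (N:ℝ)
            + Real.logb 2 ((Fintype.card A : ℕ):ℝ))) := mul_le_mul_of_nonneg_left key hr0
      _ = 8 * (r:ℝ) * ((k:ℝ)+1) * (Real.logb 2 (N:ℝ)
            + Real.logb 2 ((Fintype.card A : ℕ):ℝ)) := by ring
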